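/- Let A ∈ ℝ^{m×n}, V ∈ ℝ^{m×l₁} with orthonormal columns, and Ω₂ ∈ ℝ^{l₂×m} with Ω₂V of full column rank. Then with B = (Ω₂V)†Ω₂A, ‖A − VB‖_F ≤ (1 + ‖V(Ω₂V)†Ω₂‖₂) · ‖A − VVᵀA‖_F. -/

import Mathlib

open Matrix BigOperators

theorem Matrix.isHermitian_transpose_mul_self {m n α : Type*} [Fintype m] [CommSemiring α]
    [StarRing α] [TrivialStar α] (A : Matrix m n α) : (Aᵀ * A).IsHermitian := by
  rw [IsHermitian, conjTranspose_eq_transpose_of_trivial, transpose_mul, transpose_transpose]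

noncomputable def singularValue {m n : ℕ} (A : Matrix (Fin m) (Fin n) ℝ) : Fin n → ℝ :=
  fun j =>
    Real.sqrt ((Matrix.isHermitian_transpose_mul_self A).eigenvalues
      (Tuple.sort (fun i => -(Matrix.isHermitian_transpose_mul_self A).eigenvalues i) j))

noncomputable def matSpectralNorm {m n : ℕ} (A : Matrix (Fin m) (Fin n) ℝ) : ℝ :=
  ‖LinearMap.toContinuousLinearMap (Matrix.toEuclideanLin A)‖

noncomputable def frobNorm {m n : ℕ} (A : Matrix (Fin m) (Fin n) ℝ) : ℝ :=
  Real.sqrt (∑ i, ∑ j, (A i j)^2)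

noncomputable def pinv {a b : ℕ} (W : Matrix (Fin a) (Fin b) ℝ) : Matrix (Fin b) (Fin a) ℝ :=
  if a ≤ b then Wᵀ * (W * Wᵀ)⁻¹ else (Wᵀ * W)⁻¹ * Wᵀ

lemma frobNorm_nonneg {m n : ℕ} (A : Matrix (Fin m) (Fin n) ℝ) : 0 ≤ frobNorm A :=
  Real.sqrt_nonneg _

lemma frobNorm_sq {m n : ℕ} (A : Matrix (Fin m) (Fin n) ℝ) :
    frobNorm A ^ 2 = ∑ i, ∑ j, (A i j)^2 := by
  rw [frobNorm, Real.sq_sqrt]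
  positivity

lemma mulVec_norm_le {m n : ℕ} (M : Matrix (Fin m) (Fin n) ℝ) (x : EuclideanSpace ℝ (Fin n)) :
    ‖Matrix.toEuclideanLin M x‖ ≤ matSpectralNorm M * ‖x‖ :=
  (LinearMap.toContinuousLinearMap (Matrix.toEuclideanLin M)).le_opNorm x

lemma frobNorm_mul_le {m n k : ℕ} (M : Matrix (Fin m) (Fin n) ℝ) (N : Matrix (Fin n) (Fin k) ℝ) :
    frobNorm (M * N) ≤ matSpectralNorm M * frobNorm N := by
  have hs : (0:ℝ) ≤ matSpectralNorm M := norm_nonneg _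
  have key : frobNorm (M * N) ^ 2 ≤ (matSpectralNorm M * frobNorm N) ^ 2 := by
    rw [frobNorm_sq, mul_pow, frobNorm_sq, Finset.sum_comm,
      show (∑ i, ∑ j, N i j ^ 2) = ∑ j, ∑ i, N i j ^ 2 from Finset.sum_comm,
      Finset.mul_sum]
    apply Finset.sum_le_sum
    intro j _
    set c : EuclideanSpace ℝ (Fin n) := (WithLp.equiv 2 _).symm (fun i => N i j) with hc
    have h1 : ∑ i, (M * N) i j ^ 2 = ‖Matrix.toEuclideanLin M c‖ ^ 2 := by
      rw [EuclideanSpace.norm_eq, Real.sq_sqrt (by positivity)]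
      congr 1; ext i
      rw [Matrix.toEuclideanLin_apply]
      simp [Matrix.mul_apply, Matrix.mulVec, dotProduct, sq_abs, hc, WithLp.equiv_symm_apply]
    have h2 : ‖c‖ ^ 2 = ∑ i, N i j ^ 2 := by
      rw [EuclideanSpace.norm_eq, Real.sq_sqrt (by positivity)]
      simp [hc, sq_abs]
    rw [h1, ← h2]
    calc ‖Matrix.toEuclideanLin M c‖ ^ 2 ≤ (matSpectralNorm M * ‖c‖) ^ 2 := by
          apply pow_le_pow_left₀ (norm_nonneg _) (mulVec_norm_le M c)
      _ = matSpectralNorm M ^ 2 * ‖c‖ ^ 2 := by ring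
  have h := Real.sqrt_le_sqrt key
  rwa [Real.sqrt_sq (frobNorm_nonneg _), Real.sqrt_sq (mul_nonneg hs (frobNorm_nonneg _))] at h

section
attribute [local instance] Matrix.frobeniusSeminormedAddCommGroup

lemma frobNorm_eq_norm {m n : ℕ} (A : Matrix (Fin m) (Fin n) ℝ) : frobNorm A = ‖A‖ := by
  rw [Matrix.frobenius_norm_def, frobNorm, Real.sqrt_eq_rpow]
  congr 1
  apply Finset.sum_congr rfl; intro i _
  apply Finset.sum_congr rfl; intro j _
  rw [show ((2:ℝ)) = ((2:ℕ):ℝ) by norm_num, Real.rpow_natCast, Real.norm_eq_abs, sq_abs]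

lemma frobNorm_triangle {m n : ℕ} (X Y : Matrix (Fin m) (Fin n) ℝ) :
    frobNorm (X + Y) ≤ frobNorm X + frobNorm Y := by
  simp only [frobNorm_eq_norm]
  exact norm_add_le X Y

end


lemma isUnit_of_rank_eq {k : ℕ} (M : Matrix (Fin k) (Fin k) ℝ) (h : M.rank = k) : IsUnit M := by
  rw [← Matrix.mulVec_surjective_iff_isUnit]
  have : LinearMap.range M.mulVecLin = ⊤ := by
    apply Submodule.eq_top_of_finrank_eq
    rw [← Matrix.rank, h]
    simp
  intro y
  exact (LinearMap.range_eq_top.mp this) y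

lemma frobNorm_neg {m n : ℕ} (X : Matrix (Fin m) (Fin n) ℝ) : frobNorm (-X) = frobNorm X := by
  simp [frobNorm]

lemma pinv_mul_self {l₁ l₂ : ℕ} (W : Matrix (Fin l₂) (Fin l₁) ℝ) (hrank : W.rank = l₁) :
    pinv W * W = 1 := by
  have hTT : IsUnit (Wᵀ * W) := by
    apply isUnit_of_rank_eq
    rw [Matrix.rank_transpose_mul_self, hrank]
  rw [pinv]
  split_ifs with h
  · -- l₂ ≤ l₁, but rank forces l₁ ≤ l₂
    have hle : l₁ ≤ l₂ := by
      have := Matrix.rank_le_height W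
      omega
    have heq : l₁ = l₂ := le_antisymm hle h
    have hWWT : IsUnit (W * Wᵀ) := by
      apply isUnit_of_rank_eq
      rw [Matrix.rank_self_mul_transpose, hrank, heq]
    have hkey : (Wᵀ * W) * (Wᵀ * (W * Wᵀ)⁻¹ * W) = (Wᵀ * W) * 1 := by
      rw [mul_one]
      calc (Wᵀ * W) * (Wᵀ * (W * Wᵀ)⁻¹ * W)
          = Wᵀ * ((W * Wᵀ) * (W * Wᵀ)⁻¹) * W := by
            simp only [Matrix.mul_assoc]
        _ = Wᵀ * W := by
            rw [Matrix.mul_nonsing_inv _ ((Matrix.isUnit_iff_isUnit_det _).mp hWWT)]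
            simp
    exact hTT.mul_left_cancel hkey |>.trans rfl
  · rw [Matrix.mul_assoc, Matrix.nonsing_inv_mul _ ((Matrix.isUnit_iff_isUnit_det _).mp hTT)]

/-- Single-pass error bound in the Frobenius norm:
‖A − VB‖_F ≤ (1 + ‖V(Ω₂V)†Ω₂‖₂)·‖A − VVᵀA‖_F with B = (Ω₂V)†Ω₂A. -/
theorem single_pass_frobenius_bound {m n l₁ l₂ : ℕ} (A : Matrix (Fin m) (Fin n) ℝ)
    (V : Matrix (Fin m) (Fin l₁) ℝ) (hV : Vᵀ * V = 1)
    (Ω₂ : Matrix (Fin l₂) (Fin m) ℝ)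
    (hrank : (Ω₂ * V).rank = l₁)
    (B : Matrix (Fin l₁) (Fin n) ℝ) (hB : B = pinv (Ω₂ * V) * (Ω₂ * A)) :
    frobNorm (A - V * B) ≤
      (1 + matSpectralNorm (V * pinv (Ω₂ * V) * Ω₂)) * frobNorm (A - V * (Vᵀ * A)) := by

  set P : Matrix (Fin m) (Fin m) ℝ := V * pinv (Ω₂ * V) * Ω₂ with hP
  set E : Matrix (Fin m) (Fin n) ℝ := A - V * (Vᵀ * A) with hE
  have hPV : P * V = V := by
    rw [hP, Matrix.mul_assoc, Matrix.mul_assoc, pinv_mul_self _ hrank, Matrix.mul_one]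
  have key : A - V * B = E + (-(P * E)) := by
    rw [hB, hE]
    have h1 : P * (A - V * (Vᵀ * A)) = P * A - V * (Vᵀ * A) := by
      rw [Matrix.mul_sub, ← Matrix.mul_assoc, hPV]
    have h2 : V * (pinv (Ω₂ * V) * (Ω₂ * A)) = P * A := by
      rw [hP, Matrix.mul_assoc, Matrix.mul_assoc]
    rw [h1, h2]
    abel
  rw [key]
  calc frobNorm (E + (-(P * E))) ≤ frobNorm E + frobNorm (-(P * E)) := frobNorm_triangle _ _
    _ = frobNorm E + frobNorm (P * E) := by rw [frobNorm_neg]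
    _ ≤ frobNorm E + matSpectralNorm P * frobNorm E := by
        linarith [frobNorm_mul_le P E]
    _ = (1 + matSpectralNorm P) * frobNorm E := by ring
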